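/- arXiv:2604.25868 — 4 statements merged into one kernel-verified Lean document; each statement's English description precedes it below -/
import Mathlib

section
/- Let Φ be a locally finite set of points in the Euclidean plane ℝ² and let σ, ρ, ν ≥ 0. Then Φ is (σ,ρ,ν)-ring regulated about the origin if and only if Φ is (σ,ρ,ν)-shot-noise ring regulated about the origin. -/
open MeasureTheory Set

noncomputable section

abbrev Plane : Type := EuclideanSpace ℝ (Fin 2)

open Classical in
lemma key {ρ ν : ℝ} (hρ : 0 ≤ ρ) (hν : 0 ≤ ν) {f : ℝ → ℝ}
    (hf0 : ∀ x, 0 ≤ f x) (hfa : AntitoneOn f (Set.Ici 0)) (R : ℝ)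
    (hfint : ∀ a b : ℝ, 0 ≤ a → IntegrableOn f (Set.Ioc a b))
    (hsfint : ∀ a b : ℝ, 0 ≤ a → IntegrableOn (fun s => s * f s) (Set.Ioc a b)) :
    ∀ n : ℕ, ∀ A : Finset Plane, A.card = n → ∀ σ' r : ℝ, 0 ≤ σ' → 0 ≤ r →
      (∀ x ∈ A, r < ‖x‖ ∧ ‖x‖ < R) →
      (∀ b : ℝ, r < b → ((A.filter fun x => ‖x‖ < b).card : ℝ)
          ≤ σ' + ρ * (b - r) + ν * (b ^ 2 - r ^ 2)) →
      ∑ x ∈ A, f ‖x‖ ≤ σ' * f r + ρ * (∫ s in Set.Ioc r R, f s)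
        + 2 * ν * (∫ s in Set.Ioc r R, s * f s) := by
  intro n
  induction n using Nat.strong_induction_on with
  | _ n IH =>
  intro A hcard σ' r hσ' hr hmem hcount
  rcases A.eq_empty_or_nonempty with rfl | hne
  · have h1 : 0 ≤ ∫ s in Set.Ioc r R, f s :=
      setIntegral_nonneg measurableSet_Ioc fun s _ => hf0 s
    have h2 : 0 ≤ ∫ s in Set.Ioc r R, s * f s :=
      setIntegral_nonneg measurableSet_Ioc fun s hs =>
        mul_nonneg (hr.trans hs.1.le) (hf0 s)
    have := mul_nonneg hσ' (hf0 r)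
    simp only [Finset.sum_empty]
    nlinarith
  obtain ⟨x₀, hx₀, hmin⟩ := A.exists_min_image (fun x => ‖x‖) hne
  set t₁ := ‖x₀‖ with ht₁def
  have hrt : r < t₁ := (hmem x₀ hx₀).1
  have htR : t₁ < R := (hmem x₀ hx₀).2
  have ht₁0 : 0 ≤ t₁ := hr.trans hrt.le
  set B := A.filter (fun x => ‖x‖ = t₁) with hBdef
  set A' := A.filter (fun x => t₁ < ‖x‖) with hA'def
  have hAeq : A = B ∪ A' := by
    ext x
    simp only [hBdef, hA'def, Finset.mem_union, Finset.mem_filter]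
    constructor
    · intro hx
      rcases (hmin x hx).eq_or_lt with h | h
      · exact Or.inl ⟨hx, h.symm⟩
      · exact Or.inr ⟨hx, h⟩
    · rintro (⟨hx, -⟩ | ⟨hx, -⟩) <;> exact hx
  have hdisj : Disjoint B A' := by
    rw [Finset.disjoint_left]
    intro x hxB hxA'
    rw [hBdef, Finset.mem_filter] at hxB
    rw [hA'def, Finset.mem_filter] at hxA'
    exact absurd hxB.2 (ne_of_gt hxA'.2)
  set m := B.card with hmdef
  have hx₀B : x₀ ∈ B := by rw [hBdef, Finset.mem_filter]; exact ⟨hx₀, rfl⟩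
  have hm1 : 1 ≤ m := Finset.card_pos.2 ⟨x₀, hx₀B⟩
  -- the count split for b > t₁
  have hcsplit : ∀ b : ℝ, t₁ < b →
      (A.filter fun x => ‖x‖ < b) = B ∪ (A'.filter fun x => ‖x‖ < b) := by
    intro b hb
    ext x
    simp only [hBdef, hA'def, Finset.mem_union, Finset.mem_filter]
    constructor
    · rintro ⟨hx, hxb⟩
      rcases (hmin x hx).eq_or_lt with h | h
      · exact Or.inl ⟨hx, h.symm⟩
      · exact Or.inr ⟨⟨hx, h⟩, hxb⟩
    · rintro (⟨hx, he⟩ | ⟨⟨hx, -⟩, hxb⟩)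
      · exact ⟨hx, he ▸ hb⟩
      · exact ⟨hx, hxb⟩
  have hdisj' : ∀ b : ℝ, Disjoint B (A'.filter fun x => ‖x‖ < b) := fun b =>
    hdisj.mono_right (Finset.filter_subset _ _)
  have hmb : ∀ b : ℝ, t₁ < b → (m : ℝ) + ((A'.filter fun x => ‖x‖ < b).card : ℝ)
      ≤ σ' + ρ * (b - r) + ν * (b ^ 2 - r ^ 2) := by
    intro b hb
    have h := hcount b (hrt.trans hb)
    rw [hcsplit b hb, Finset.card_union_of_disjoint (hdisj' b)] at h
    push_cast at h
    linarith
  have hm : (m : ℝ) ≤ σ' + ρ * (t₁ - r) + ν * (t₁ ^ 2 - r ^ 2) := by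
    have hcont : Filter.Tendsto (fun b : ℝ => σ' + ρ * (b - r) + ν * (b ^ 2 - r ^ 2))
        (nhdsWithin t₁ (Set.Ioi t₁)) (nhds (σ' + ρ * (t₁ - r) + ν * (t₁ ^ 2 - r ^ 2))) := by
      apply Filter.Tendsto.mono_left _ nhdsWithin_le_nhds
      exact (by fun_prop : Continuous fun b : ℝ => σ' + ρ * (b - r) + ν * (b ^ 2 - r ^ 2)).tendsto t₁
    refine ge_of_tendsto hcont ?_
    filter_upwards [self_mem_nhdsWithin] with b hb
    have := hmb b hb
    have : ((A'.filter fun x => ‖x‖ < b).card : ℝ) ≥ 0 := Nat.cast_nonneg _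
    linarith [hmb b hb]
  set σ'' := σ' + ρ * (t₁ - r) + ν * (t₁ ^ 2 - r ^ 2) - m with hσ''def
  have hσ''0 : 0 ≤ σ'' := by rw [hσ''def]; linarith
  have hA'mem : ∀ x ∈ A', t₁ < ‖x‖ ∧ ‖x‖ < R := by
    intro x hx
    rw [hA'def, Finset.mem_filter] at hx
    exact ⟨hx.2, (hmem x hx.1).2⟩
  have hA'count : ∀ b : ℝ, t₁ < b → ((A'.filter fun x => ‖x‖ < b).card : ℝ)
      ≤ σ'' + ρ * (b - t₁) + ν * (b ^ 2 - t₁ ^ 2) := by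
    intro b hb
    have := hmb b hb
    rw [hσ''def]; linarith
  have hcardA' : A'.card < n := by
    have : A.card = m + A'.card := by
      rw [hAeq, Finset.card_union_of_disjoint hdisj]
    omega
  have hIH := IH A'.card hcardA' A' rfl σ'' t₁ hσ''0 ht₁0 hA'mem hA'count
  have hsumB : ∑ x ∈ B, f ‖x‖ = (m : ℝ) * f t₁ := by
    have hc : ∀ x ∈ B, f ‖x‖ = f t₁ := by
      intro x hx
      rw [hBdef, Finset.mem_filter] at hx
      rw [hx.2]
    rw [Finset.sum_congr rfl hc, Finset.sum_const, nsmul_eq_mul]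
  have hsum : ∑ x ∈ A, f ‖x‖ = (m : ℝ) * f t₁ + ∑ x ∈ A', f ‖x‖ := by
    rw [hAeq, Finset.sum_union hdisj, hsumB]
  -- splitting the integrals
  have hIf : (∫ s in Set.Ioc r R, f s)
      = (∫ s in Set.Ioc r t₁, f s) + ∫ s in Set.Ioc t₁ R, f s := by
    rw [← Set.Ioc_union_Ioc_eq_Ioc hrt.le htR.le,
      setIntegral_union (Set.Ioc_disjoint_Ioc_of_le le_rfl) measurableSet_Ioc
        (hfint r t₁ hr) (hfint t₁ R ht₁0)]
  have hIsf : (∫ s in Set.Ioc r R, s * f s)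
      = (∫ s in Set.Ioc r t₁, s * f s) + ∫ s in Set.Ioc t₁ R, s * f s := by
    rw [← Set.Ioc_union_Ioc_eq_Ioc hrt.le htR.le,
      setIntegral_union (Set.Ioc_disjoint_Ioc_of_le le_rfl) measurableSet_Ioc
        (hsfint r t₁ hr) (hsfint t₁ R ht₁0)]
  -- comparison inequalities
  have hfle : ∀ s ∈ Set.Ioc r t₁, f t₁ ≤ f s := fun s hs =>
    hfa (Set.mem_Ici.2 (hr.trans hs.1.le)) (Set.mem_Ici.2 ht₁0) hs.2
  have h2 : (t₁ - r) * f t₁ ≤ ∫ s in Set.Ioc r t₁, f s := by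
    have hc : (∫ _ in Set.Ioc r t₁, f t₁) = (t₁ - r) * f t₁ := by
      rw [setIntegral_const, Real.volume_real_Ioc_of_le hrt.le,
        smul_eq_mul]
    rw [← hc]
    exact setIntegral_mono_on (integrableOn_const (by
      rw [Real.volume_Ioc]; exact ENNReal.ofReal_ne_top)) (hfint r t₁ hr)
      measurableSet_Ioc hfle
  have h3 : (t₁ ^ 2 - r ^ 2) / 2 * f t₁ ≤ ∫ s in Set.Ioc r t₁, s * f s := by
    have hc : (∫ s in Set.Ioc r t₁, s * f t₁) = (t₁ ^ 2 - r ^ 2) / 2 * f t₁ := by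
      rw [integral_mul_const]
      congr 1
      rw [← intervalIntegral.integral_of_le hrt.le, integral_id]
    rw [← hc]
    refine setIntegral_mono_on ?_ (hsfint r t₁ hr) measurableSet_Ioc ?_
    · exact ((continuous_id.mul continuous_const).integrableOn_Ioc)
    · intro s hs
      exact mul_le_mul_of_nonneg_left (hfle s hs) (hr.trans hs.1.le)
  have h1 : σ' * f t₁ ≤ σ' * f r :=
    mul_le_mul_of_nonneg_left (hfa (Set.mem_Ici.2 hr) (Set.mem_Ici.2 ht₁0) hrt.le) hσ'
  have hft₁ : 0 ≤ f t₁ := hf0 t₁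
  have e2 := mul_le_mul_of_nonneg_left h2 hρ
  have e3 := mul_le_mul_of_nonneg_left h3 (by linarith : (0:ℝ) ≤ 2 * ν)
  rw [hsum, hIf, hIsf]
  have hmf : (m : ℝ) * f t₁ + σ'' * f t₁
      = σ' * f t₁ + ρ * ((t₁ - r) * f t₁) + 2 * ν * ((t₁ ^ 2 - r ^ 2) / 2 * f t₁) := by
    rw [hσ''def]; ring
  nlinarith [hIH]

private lemma tsum_finite_set {s : Set Plane} (hs : s.Finite) (g : Plane → ℝ) :
    (∑' x : s, g x) = ∑ x ∈ hs.toFinset, g x := by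
  haveI := hs.fintype
  rw [tsum_fintype]
  rw [← Finset.sum_coe_sort hs.toFinset g]
  exact Fintype.sum_equiv (Equiv.setCongr hs.coe_toFinset.symm) _ _ (fun x => rfl)


/-- `Φ` is `(σ,ρ,ν)`-ring regulated about the origin: the number of points of `Φ` in any
open annulus `{z : r < ‖z‖ < R}` is at most `σ + ρ(R-r) + ν(R²-r²)`. -/
def RingRegulated (Φ : Set Plane) (σ ρ ν : ℝ) : Prop :=
  ∀ r R : ℝ, 0 ≤ r → r < R →
    ((Φ ∩ {z : Plane | r < ‖z‖ ∧ ‖z‖ < R}).ncard : ℝ)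
      ≤ σ + ρ * (R - r) + ν * (R ^ 2 - r ^ 2)

/-- `Φ` is `(σ,ρ,ν)`-shot-noise ring regulated about the origin: for every bounded,
non-increasing, nonnegative function `f` on `[0,∞)` with `∫₀^∞ r f(r) dr < ∞`, and all
`0 ≤ r < R`, the shot noise `Σ_{x ∈ Φ, r < ‖x‖ < R} f(‖x‖)` is at most
`σ f(r) + ρ ∫_r^R f + 2ν ∫_r^R s f(s) ds`. -/
def ShotNoiseRingRegulated (Φ : Set Plane) (σ ρ ν : ℝ) : Prop :=
  ∀ f : ℝ → ℝ,
    (∀ x, 0 ≤ f x) →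
    AntitoneOn f (Set.Ici 0) →
    BddAbove (f '' Set.Ici 0) →
    IntegrableOn (fun s => s * f s) (Set.Ioi 0) →
    ∀ r R : ℝ, 0 ≤ r → r < R →
      (∑' x : (Φ ∩ {z : Plane | r < ‖z‖ ∧ ‖z‖ < R} : Set Plane), f ‖(x : Plane)‖)
        ≤ σ * f r + ρ * (∫ s in Set.Ioc r R, f s) + 2 * ν * (∫ s in Set.Ioc r R, s * f s)

theorem stmt0 (Φ : Set Plane) (σ ρ ν : ℝ)
    (hσ : 0 ≤ σ) (hρ : 0 ≤ ρ) (hν : 0 ≤ ν)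
    (hloc : ∀ R : ℝ, (Φ ∩ Metric.closedBall 0 R).Finite) :
    RingRegulated Φ σ ρ ν ↔ ShotNoiseRingRegulated Φ σ ρ ν := by
  constructor
  · -- Ring regulated implies shot-noise ring regulated
    intro hreg f hf0 hfa hfbdd hfint r R hr hrR
    classical
    have hfint' : ∀ a b : ℝ, 0 ≤ a → IntegrableOn f (Set.Ioc a b) := by
      intro a b ha
      have hsub : Set.Icc a b ⊆ Set.Ici 0 := fun x hx => le_trans ha hx.1
      exact (AntitoneOn.integrableOn_isCompact isCompact_Icc (hfa.mono hsub)).mono_set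
        Set.Ioc_subset_Icc_self
    have hsfint' : ∀ a b : ℝ, 0 ≤ a → IntegrableOn (fun s => s * f s) (Set.Ioc a b) := by
      intro a b ha
      exact hfint.mono_set (fun x hx => lt_of_le_of_lt ha hx.1)
    set S := (Φ ∩ {z : Plane | r < ‖z‖ ∧ ‖z‖ < R} : Set Plane) with hSdef
    have hSfin : S.Finite := by
      refine (hloc R).subset ?_
      rintro z ⟨h1, h2⟩
      exact ⟨h1, by rw [Metric.mem_closedBall, dist_zero_right]; exact h2.2.le⟩
    set A := hSfin.toFinset with hAdef
    have hmem : ∀ x ∈ A, r < ‖x‖ ∧ ‖x‖ < R := by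
      intro x hx
      rw [hAdef, Set.Finite.mem_toFinset] at hx
      exact hx.2
    have hcount : ∀ b : ℝ, r < b → ((A.filter fun x => ‖x‖ < b).card : ℝ)
        ≤ σ + ρ * (b - r) + ν * (b ^ 2 - r ^ 2) := by
      intro b hb
      set T := (Φ ∩ {z : Plane | r < ‖z‖ ∧ ‖z‖ < b} : Set Plane)
      have hTfin : T.Finite := by
        refine (hloc b).subset ?_
        rintro z ⟨h1, h2⟩
        exact ⟨h1, by rw [Metric.mem_closedBall, dist_zero_right]; exact h2.2.le⟩
      have hsub : ((A.filter fun x => ‖x‖ < b) : Set Plane) ⊆ T := by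
        intro x hx
        rw [Finset.coe_filter, Set.mem_setOf_eq] at hx
        obtain ⟨hxA, hxb⟩ := hx
        rw [hAdef, Set.Finite.mem_toFinset] at hxA
        exact ⟨hxA.1, hxA.2.1, hxb⟩
      calc ((A.filter fun x => ‖x‖ < b).card : ℝ)
          = (((A.filter fun x => ‖x‖ < b) : Set Plane).ncard : ℝ) := by
            rw [Set.ncard_coe_finset]
        _ ≤ (T.ncard : ℝ) := by
            exact_mod_cast Nat.cast_le.2 (Set.ncard_le_ncard hsub hTfin)
        _ ≤ σ + ρ * (b - r) + ν * (b ^ 2 - r ^ 2) := hreg r b hr hb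
    have hkey := key hρ hν hf0 hfa R hfint' hsfint' A.card A rfl σ r hσ hr hmem hcount
    refine le_trans ?_ hkey
    rw [tsum_finite_set hSfin fun z => f ‖z‖]
  · -- Shot-noise ring regulated implies ring regulated
    intro hsn r R hr hrR
    classical
    set f : ℝ → ℝ := fun s => if s < R then 1 else 0 with hfdef
    have hf0 : ∀ x, 0 ≤ f x := by
      intro x; rw [hfdef]; dsimp only; split <;> norm_num
    have hfa : AntitoneOn f (Set.Ici 0) := by
      intro a _ b _ hab
      rw [hfdef]; dsimp only
      by_cases h2 : a < R
      · rw [if_pos h2]; split <;> norm_num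
      · have hb : ¬ b < R := fun hb => h2 (lt_of_le_of_lt hab hb)
        rw [if_neg h2, if_neg hb]
    have hfbdd : BddAbove (f '' Set.Ici 0) := by
      refine ⟨1, ?_⟩
      rintro y ⟨x, -, rfl⟩
      rw [hfdef]; dsimp only; split <;> norm_num
    have hfint : IntegrableOn (fun s => s * f s) (Set.Ioi 0) := by
      have hbase : Integrable ((Set.Ioo 0 R).indicator id) := by
        rw [integrable_indicator_iff measurableSet_Ioo]
        exact (continuous_id.integrableOn_Ioc).mono_set Set.Ioo_subset_Ioc_self
      refine (hbase.integrableOn).congr_fun ?_ measurableSet_Ioi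
      intro s hs
      rw [Set.mem_Ioi] at hs
      rw [hfdef]; dsimp only
      by_cases h : s < R
      · rw [if_pos h, Set.indicator_of_mem (Set.mem_Ioo.2 ⟨hs, h⟩), id, mul_one]
      · rw [if_neg h, Set.indicator_of_notMem (fun hc => h hc.2), mul_zero]
    have h := hsn f hf0 hfa hfbdd hfint r R hr hrR
    set S := (Φ ∩ {z : Plane | r < ‖z‖ ∧ ‖z‖ < R} : Set Plane) with hSdef
    have hSfin : S.Finite := by
      refine (hloc R).subset ?_
      rintro z ⟨h1, h2⟩
      exact ⟨h1, by rw [Metric.mem_closedBall, dist_zero_right]; exact h2.2.le⟩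
    have hlhs : (∑' x : S, f ‖(x : Plane)‖) = (S.ncard : ℝ) := by
      refine (tsum_finite_set hSfin fun z => f ‖z‖).trans ?_
      have hc : ∀ x ∈ hSfin.toFinset, f ‖x‖ = 1 := by
        intro x hx
        rw [Set.Finite.mem_toFinset] at hx
        rw [hfdef]; exact if_pos hx.2.2
      rw [Finset.sum_congr rfl hc, Finset.sum_const, nsmul_eq_mul, mul_one,
        Set.ncard_eq_toFinset_card _ hSfin]
    have hfr : f r = 1 := if_pos hrR
    have hint1 : (∫ s in Set.Ioc r R, f s) = R - r := by
      rw [integral_Ioc_eq_integral_Ioo]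
      rw [setIntegral_congr_fun measurableSet_Ioo
        (fun s hs => (if_pos hs.2 : f s = 1))]
      rw [setIntegral_const, Real.volume_real_Ioo_of_le hrR.le,
        smul_eq_mul, mul_one]
    have hint2 : (∫ s in Set.Ioc r R, s * f s) = (R ^ 2 - r ^ 2) / 2 := by
      rw [integral_Ioc_eq_integral_Ioo]
      rw [setIntegral_congr_fun measurableSet_Ioo
        (fun s hs => by rw [hfdef]; dsimp only; rw [if_pos hs.2, mul_one] :
          Set.EqOn (fun s => s * f s) (fun s => s) (Set.Ioo r R))]
      rw [← integral_Ioc_eq_integral_Ioo, ← intervalIntegral.integral_of_le hrR.le,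
        integral_id]
    rw [hlhs, hfr, hint1, hint2] at h
    linarith
end
end

section
/- Let Φ be a locally finite set of points in ℝ² that is (σ,ρ,ν)-ring regulated about the origin, and let ℓ be a path-loss function as in the context. Then for every r > r₀, the tail interference satisfies Σ_{w ∈ Φ, ‖w‖ > r} ℓ(‖w‖) ≤ ℓ(r)·(σ + ρ_β r + ν_β r²), where ρ_β = (C/C′)·ρ/(β − 1) and ν_β = (C/C′)·2ν/(β − 2). -/
set_option maxHeartbeats 1000000


open MeasureTheory Set

noncomputable section

/-- The tail interference at the origin from points of `Φ` at distance greater than `r`,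
for the path loss `ℓ`. -/
def tailInterference (ℓ : ℝ → ℝ) (Φ : Set Plane) (r : ℝ) : ℝ :=
  ∑' w : {w : Plane // w ∈ Φ ∧ r < ‖w‖}, ℓ ‖(w : Plane)‖

lemma key_rpow (m γ a b : ℝ) (hm : 0 < m) (hγ : 0 < γ) (ha : 0 < a) (hab : a ≤ b) :
    γ * (b ^ (-(γ + m)) * (b ^ m - a ^ m)) ≤ m * (a ^ (-γ) - b ^ (-γ)) := by
  have hb : 0 < b := ha.trans_le hab
  set L : ℝ := Real.log b - Real.log a with hLdef
  have hL0 : 0 ≤ L := sub_nonneg.2 (Real.log_le_log ha hab)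
  have ham : a ^ m = b ^ m * Real.exp (-(m * L)) := by
    rw [Real.rpow_def_of_pos ha, Real.rpow_def_of_pos hb, ← Real.exp_add]
    congr 1
    rw [hLdef]; ring
  have hag : a ^ (-γ) = b ^ (-γ) * Real.exp (γ * L) := by
    rw [Real.rpow_def_of_pos ha, Real.rpow_def_of_pos hb, ← Real.exp_add]
    congr 1
    rw [hLdef]; ring
  have e1 : 1 - m * L ≤ Real.exp (-(m * L)) := by
    have := Real.add_one_le_exp (-(m * L)); linarith
  have e2 : 1 + γ * L ≤ Real.exp (γ * L) := by
    have := Real.add_one_le_exp (γ * L); linarith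
  have hbm : (0:ℝ) < b ^ m := Real.rpow_pos_of_pos hb m
  have hbg : (0:ℝ) < b ^ (-γ) := Real.rpow_pos_of_pos hb (-γ)
  have hbgm : (0:ℝ) < b ^ (-(γ + m)) := Real.rpow_pos_of_pos hb (-(γ + m))
  have h1 : b ^ m - a ^ m ≤ m * L * b ^ m := by
    rw [ham]; nlinarith
  have h2 : γ * L * b ^ (-γ) ≤ a ^ (-γ) - b ^ (-γ) := by
    rw [hag]; nlinarith
  have hkey : b ^ (-(γ + m)) * b ^ m = b ^ (-γ) := by
    rw [← Real.rpow_add hb]; congr 1; ring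
  calc γ * (b ^ (-(γ + m)) * (b ^ m - a ^ m))
      ≤ γ * (b ^ (-(γ + m)) * (m * L * b ^ m)) := by
        apply mul_le_mul_of_nonneg_left (mul_le_mul_of_nonneg_left h1 hbgm.le) hγ.le
    _ = m * (γ * L * (b ^ (-(γ + m)) * b ^ m)) := by ring
    _ = m * (γ * L * b ^ (-γ)) := by rw [hkey]
    _ ≤ m * (a ^ (-γ) - b ^ (-γ)) := mul_le_mul_of_nonneg_left h2 hm.le

lemma key1 (β a b : ℝ) (hβ : 2 < β) (ha : 0 < a) (hab : a ≤ b) :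
    (β - 1) * (b ^ (-β) * (b - a)) ≤ a ^ (1 - β) - b ^ (1 - β) := by
  have h := key_rpow 1 (β - 1) a b one_pos (by linarith) ha hab
  rw [show -(β - 1 + 1) = -β by ring, show -(β - 1) = 1 - β by ring,
    Real.rpow_one, Real.rpow_one] at h
  linarith

lemma key2 (β a b : ℝ) (hβ : 2 < β) (ha : 0 < a) (hab : a ≤ b) :
    (β - 2) * (b ^ (-β) * (b ^ 2 - a ^ 2)) ≤ 2 * (a ^ (2 - β) - b ^ (2 - β)) := by
  have h := key_rpow 2 (β - 2) a b two_pos (by linarith) ha hab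
  rw [show -(β - 2 + 2) = -β by ring, show -(β - 2) = 2 - β by ring,
    Real.rpow_two, Real.rpow_two] at h
  linarith

lemma annulus_bound (C ρ ν β a b L : ℝ) (hC : 0 ≤ C) (hρ : 0 ≤ ρ) (hν : 0 ≤ ν)
    (hβ : 2 < β) (ha : 0 < a) (hab : a ≤ b) (hL0 : 0 ≤ L) (hLb : L ≤ C * b ^ (-β)) :
    (ρ * (b - a) + ν * (b ^ 2 - a ^ 2)) * L
      ≤ C * ρ / (β - 1) * (a ^ (1 - β) - b ^ (1 - β))
        + 2 * C * ν / (β - 2) * (a ^ (2 - β) - b ^ (2 - β)) := by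
  have hb : 0 < b := ha.trans_le hab
  have k1 := key1 β a b hβ ha hab
  have k2 := key2 β a b hβ ha hab
  have hsq : a ^ 2 ≤ b ^ 2 := by nlinarith
  have h0 : 0 ≤ ρ * (b - a) + ν * (b ^ 2 - a ^ 2) :=
    add_nonneg (mul_nonneg hρ (by linarith)) (mul_nonneg hν (by linarith))
  have step1 : (ρ * (b - a) + ν * (b ^ 2 - a ^ 2)) * L
      ≤ (ρ * (b - a) + ν * (b ^ 2 - a ^ 2)) * (C * b ^ (-β)) :=
    mul_le_mul_of_nonneg_left hLb h0
  have hβ1 : (0:ℝ) < β - 1 := by linarith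
  have hβ2 : (0:ℝ) < β - 2 := by linarith
  have h1' : C * ρ * (b ^ (-β) * (b - a)) ≤ C * ρ / (β - 1) * (a ^ (1 - β) - b ^ (1 - β)) := by
    have h := mul_le_mul_of_nonneg_left k1 (mul_nonneg hC hρ)
    rw [div_mul_eq_mul_div, le_div_iff₀ hβ1]
    nlinarith [h]
  have h2' : C * ν * (b ^ (-β) * (b ^ 2 - a ^ 2))
      ≤ 2 * C * ν / (β - 2) * (a ^ (2 - β) - b ^ (2 - β)) := by
    have h := mul_le_mul_of_nonneg_left k2 (mul_nonneg hC hν)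
    rw [div_mul_eq_mul_div, le_div_iff₀ hβ2]
    nlinarith [h]
  nlinarith [step1, h1', h2']

theorem stmt1 (Φ : Set Plane) (σ ρ ν : ℝ)
    (hσ : 0 ≤ σ) (hρ : 0 ≤ ρ) (hν : 0 ≤ ν)
    (hloc : ∀ R : ℝ, (Φ ∩ Metric.closedBall 0 R).Finite)
    (hreg : RingRegulated Φ σ ρ ν)
    (ℓ : ℝ → ℝ) (hℓ0 : ∀ r, 0 ≤ ℓ r)
    (hℓanti : AntitoneOn ℓ (Set.Ici 0))
    (hℓbdd : BddAbove (ℓ '' Set.Ici 0))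
    (C C' r₀ β : ℝ) (hC' : 0 < C') (hCC' : C' ≤ C) (hr₀ : 0 < r₀) (hβ : 2 < β)
    (hℓlb : ∀ r, r₀ < r → C' * r ^ (-β) ≤ ℓ r)
    (hℓub : ∀ r, r₀ < r → ℓ r ≤ C * r ^ (-β)) :
    ∀ r, r₀ < r →
      tailInterference ℓ Φ r
        ≤ ℓ r * (σ + (C / C') * (ρ / (β - 1)) * r + (C / C') * (2 * ν / (β - 2)) * r ^ 2) := by
  intro r hr
  classical
  have hr0 : (0:ℝ) < r := hr₀.trans hr
  have hC0 : (0:ℝ) ≤ C := le_trans hC'.le hCC'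
  have hβ1 : (0:ℝ) < β - 1 := by linarith
  have hβ2 : (0:ℝ) < β - 2 := by linarith
  -- the counting lemma
  have count : ∀ (G : Finset {w : Plane // w ∈ Φ ∧ r < ‖w‖}) (b : ℝ), r ≤ b →
      (∀ w ∈ G, ‖(w : Plane)‖ ≤ b) →
      (G.card : ℝ) ≤ σ + (ρ * (b - r) + ν * (b ^ 2 - r ^ 2)) := by
    intro G b hrb hGb
    have hε : ∀ ε : ℝ, 0 < ε →
        (G.card : ℝ) ≤ σ + (ρ * (b + ε - r) + ν * ((b + ε) ^ 2 - r ^ 2)) := by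
      intro ε hε
      have hsub : (↑(G.image (Subtype.val)) : Set Plane)
          ⊆ Φ ∩ {z : Plane | r < ‖z‖ ∧ ‖z‖ < b + ε} := by
        intro z hz
        simp only [Finset.coe_image, Set.mem_image, Finset.mem_coe] at hz
        obtain ⟨w, hwG, rfl⟩ := hz
        exact ⟨w.2.1, w.2.2, lt_of_le_of_lt (hGb w hwG) (by linarith)⟩
      have hfin : (Φ ∩ {z : Plane | r < ‖z‖ ∧ ‖z‖ < b + ε}).Finite :=
        (hloc (b + ε)).subset (fun z hz =>
          ⟨hz.1, by
            simp only [Metric.mem_closedBall, dist_zero_right]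
            exact hz.2.2.le⟩)
      have h1 : G.card ≤ (Φ ∩ {z : Plane | r < ‖z‖ ∧ ‖z‖ < b + ε}).ncard := by
        have h := Set.ncard_le_ncard hsub hfin
        rwa [Set.ncard_coe_finset, Finset.card_image_of_injective _ Subtype.val_injective] at h
      have h2 := hreg r (b + ε) hr0.le (by linarith)
      calc (G.card : ℝ) ≤ ((Φ ∩ {z : Plane | r < ‖z‖ ∧ ‖z‖ < b + ε}).ncard : ℝ) :=
            Nat.cast_le.2 h1
        _ ≤ σ + ρ * (b + ε - r) + ν * ((b + ε) ^ 2 - r ^ 2) := h2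
        _ = σ + (ρ * (b + ε - r) + ν * ((b + ε) ^ 2 - r ^ 2)) := by ring
    have hcont : Filter.Tendsto
        (fun ε : ℝ => σ + (ρ * (b + ε - r) + ν * ((b + ε) ^ 2 - r ^ 2)))
        (nhdsWithin 0 (Set.Ioi 0))
        (nhds (σ + (ρ * (b + 0 - r) + ν * ((b + 0) ^ 2 - r ^ 2)))) := by
      apply Filter.Tendsto.mono_left _ nhdsWithin_le_nhds
      exact (Continuous.tendsto (by continuity) 0)
    rw [show b + 0 = b by ring] at hcont
    exact ge_of_tendsto hcont (eventually_nhdsWithin_of_forall (fun ε hεp => hε ε hεp))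
  -- the main induction: Abel-summation style bound for finite subfamilies
  have main : ∀ n : ℕ, ∀ F : Finset {w : Plane // w ∈ Φ ∧ r < ‖w‖}, F.card = n →
      ∀ b : ℝ, r ≤ b → (∀ w ∈ F, ‖(w : Plane)‖ ≤ b) →
      ∑ w ∈ F, ℓ ‖(w : Plane)‖
        ≤ σ * ℓ r
          + (C * ρ / (β - 1) * (r ^ (1 - β) - b ^ (1 - β))
            + 2 * C * ν / (β - 2) * (r ^ (2 - β) - b ^ (2 - β)))
          + ((n : ℝ) - σ - (ρ * (b - r) + ν * (b ^ 2 - r ^ 2))) * ℓ b := by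
    intro n
    induction n with
    | zero =>
      intro F hF b hrb hFb
      rw [Finset.card_eq_zero.1 hF, Finset.sum_empty]
      have hAB := annulus_bound C ρ ν β r b (ℓ b) hC0 hρ hν hβ hr0 hrb (hℓ0 b)
        (hℓub b (lt_of_lt_of_le hr hrb))
      have hmono : ℓ b ≤ ℓ r := hℓanti (Set.mem_Ici.2 hr0.le)
        (Set.mem_Ici.2 (hr0.le.trans hrb)) hrb
      have hσm : σ * ℓ b ≤ σ * ℓ r := mul_le_mul_of_nonneg_left hmono hσ
      push_cast
      nlinarith [hℓ0 b]
    | succ m ih =>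
      intro F hF b hrb hFb
      have hne : F.Nonempty := Finset.card_pos.1 (by omega)
      obtain ⟨wm, hwm, hmax⟩ := F.exists_max_image (fun w => ‖(w : Plane)‖) hne
      set b' : ℝ := ‖(wm : Plane)‖ with hb'def
      have hrb' : r < b' := wm.2.2
      have hb'b : b' ≤ b := hFb wm hwm
      have hcard' : (F.erase wm).card = m := by
        rw [Finset.card_erase_of_mem hwm, hF]; omega
      have hIH := ih (F.erase wm) hcard' b' hrb'.le
        (fun w hw => hmax w (Finset.mem_of_mem_erase hw))
      have hcount := count F b' hrb'.le hmax
      rw [hF] at hcount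
      have hsum : ℓ b' + ∑ w ∈ F.erase wm, ℓ ‖(w : Plane)‖ = ∑ w ∈ F, ℓ ‖(w : Plane)‖ :=
        Finset.add_sum_erase F (fun w => ℓ ‖(w : Plane)‖) hwm
      have hAB := annulus_bound C ρ ν β b' b (ℓ b) hC0 hρ hν hβ (hr0.trans hrb') hb'b (hℓ0 b)
        (hℓub b (lt_of_lt_of_le hr hrb))
      have hmono : ℓ b ≤ ℓ b' := hℓanti (Set.mem_Ici.2 (hr0.trans hrb').le)
        (Set.mem_Ici.2 (hr0.le.trans hrb)) hb'b
      have hprod : 0 ≤ (σ + (ρ * (b' - r) + ν * (b' ^ 2 - r ^ 2)) - ((m : ℝ) + 1))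
          * (ℓ b' - ℓ b) := by
        apply mul_nonneg _ (by linarith)
        push_cast at hcount
        linarith
      rw [← hsum]
      push_cast
      push_cast at hIH
      nlinarith [hprod, hAB, hIH, hℓ0 b, hℓ0 b']
  -- put everything together
  have hfinal : ∀ F : Finset {w : Plane // w ∈ Φ ∧ r < ‖w‖},
      ∑ w ∈ F, ℓ ‖(w : Plane)‖
        ≤ ℓ r * (σ + (C / C') * (ρ / (β - 1)) * r + (C / C') * (2 * ν / (β - 2)) * r ^ 2) := by
    intro F
    have htail : σ * ℓ r + (C * ρ / (β - 1) * r ^ (1 - β) + 2 * C * ν / (β - 2) * r ^ (2 - β))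
        ≤ ℓ r * (σ + (C / C') * (ρ / (β - 1)) * r + (C / C') * (2 * ν / (β - 2)) * r ^ 2) := by
      have hl := hℓlb r hr
      have e1 : r ^ (1 - β) = r * r ^ (-β) := by
        rw [show (1 : ℝ) - β = 1 + -β by ring, Real.rpow_add hr0, Real.rpow_one]
      have e2 : r ^ (2 - β) = r ^ 2 * r ^ (-β) := by
        rw [show (2 : ℝ) - β = 2 + -β by ring, Real.rpow_add hr0, Real.rpow_two]
      have c1 : (0:ℝ) ≤ C / C' * (ρ / (β - 1)) * r :=
        mul_nonneg (mul_nonneg (div_nonneg hC0 hC'.le) (div_nonneg hρ hβ1.le)) hr0.le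
      have c2 : (0:ℝ) ≤ C / C' * (2 * ν / (β - 2)) * r ^ 2 :=
        mul_nonneg (mul_nonneg (div_nonneg hC0 hC'.le)
          (div_nonneg (by linarith) hβ2.le)) (sq_nonneg r)
      have h1 : C / C' * (ρ / (β - 1)) * r * (C' * r ^ (-β))
          ≤ C / C' * (ρ / (β - 1)) * r * ℓ r := mul_le_mul_of_nonneg_left hl c1
      have h2 : C / C' * (2 * ν / (β - 2)) * r ^ 2 * (C' * r ^ (-β))
          ≤ C / C' * (2 * ν / (β - 2)) * r ^ 2 * ℓ r := mul_le_mul_of_nonneg_left hl c2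
      have hs1 : C / C' * (ρ / (β - 1)) * r * (C' * r ^ (-β)) = C * ρ / (β - 1) * r ^ (1 - β) := by
        rw [e1]; field_simp
      have hs2 : C / C' * (2 * ν / (β - 2)) * r ^ 2 * (C' * r ^ (-β))
          = 2 * C * ν / (β - 2) * r ^ (2 - β) := by
        rw [e2]; field_simp
      rw [hs1] at h1
      rw [hs2] at h2
      nlinarith [h1, h2]
    rcases F.eq_empty_or_nonempty with hFe | hFne
    · rw [hFe, Finset.sum_empty]
      calc (0:ℝ) ≤ σ * ℓ r + (C * ρ / (β - 1) * r ^ (1 - β) + 2 * C * ν / (β - 2) * r ^ (2 - β)) := by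
            have p1 : (0:ℝ) < r ^ (1 - β) := Real.rpow_pos_of_pos hr0 _
            have p2 : (0:ℝ) < r ^ (2 - β) := Real.rpow_pos_of_pos hr0 _
            have := mul_nonneg hσ (hℓ0 r)
            have q1 : (0:ℝ) ≤ C * ρ / (β - 1) := div_nonneg (mul_nonneg hC0 hρ) hβ1.le
            have q2 : (0:ℝ) ≤ 2 * C * ν / (β - 2) :=
              div_nonneg (mul_nonneg (by linarith) hν) hβ2.le
            nlinarith
        _ ≤ _ := htail
    · obtain ⟨wm, hwm, hmax⟩ := F.exists_max_image (fun w => ‖(w : Plane)‖) hFne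
      set b : ℝ := ‖(wm : Plane)‖ with hbdef
      have hrb : r < b := wm.2.2
      have hb0 : (0:ℝ) < b := hr0.trans hrb
      have hmain := main F.card F rfl b hrb.le hmax
      have hcount := count F b hrb.le hmax
      have hlast : ((F.card : ℝ) - σ - (ρ * (b - r) + ν * (b ^ 2 - r ^ 2))) * ℓ b ≤ 0 := by
        have h := mul_le_mul_of_nonneg_right
          (show (F.card : ℝ) - σ - (ρ * (b - r) + ν * (b ^ 2 - r ^ 2)) ≤ 0 by linarith)
          (hℓ0 b)
        simpa using h
      have hE : C * ρ / (β - 1) * (r ^ (1 - β) - b ^ (1 - β))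
            + 2 * C * ν / (β - 2) * (r ^ (2 - β) - b ^ (2 - β))
          ≤ C * ρ / (β - 1) * r ^ (1 - β) + 2 * C * ν / (β - 2) * r ^ (2 - β) := by
        have p1 : (0:ℝ) < b ^ (1 - β) := Real.rpow_pos_of_pos hb0 _
        have p2 : (0:ℝ) < b ^ (2 - β) := Real.rpow_pos_of_pos hb0 _
        have q1 : (0:ℝ) ≤ C * ρ / (β - 1) := div_nonneg (mul_nonneg hC0 hρ) hβ1.le
        have q2 : (0:ℝ) ≤ 2 * C * ν / (β - 2) :=
          div_nonneg (mul_nonneg (by linarith) hν) hβ2.le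
        nlinarith
      calc ∑ w ∈ F, ℓ ‖(w : Plane)‖ ≤ _ := hmain
        _ ≤ σ * ℓ r + (C * ρ / (β - 1) * r ^ (1 - β) + 2 * C * ν / (β - 2) * r ^ (2 - β)) := by
            linarith
        _ ≤ _ := htail
  have hRHS0 : (0:ℝ) ≤ ℓ r * (σ + (C / C') * (ρ / (β - 1)) * r
      + (C / C') * (2 * ν / (β - 2)) * r ^ 2) := by
    apply mul_nonneg (hℓ0 r)
    have c1 : (0:ℝ) ≤ C / C' * (ρ / (β - 1)) * r :=
      mul_nonneg (mul_nonneg (div_nonneg hC0 hC'.le) (div_nonneg hρ hβ1.le)) hr0.le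
    have c2 : (0:ℝ) ≤ C / C' * (2 * ν / (β - 2)) * r ^ 2 :=
      mul_nonneg (mul_nonneg (div_nonneg hC0 hC'.le)
        (div_nonneg (by linarith) hβ2.le)) (sq_nonneg r)
    linarith
  unfold tailInterference
  exact tsum_le_of_sum_le' hRHS0 hfinal
end
end

section
/- Let Φ be a locally finite set of points in ℝ² that is (σ,ρ,ν)-ring regulated about the origin, let ℓ be a path-loss function as in the context and γ₀ > 0. Then for every x ∈ ℝ² with ‖x‖ > r₀, SrINR(x, Φ) ≥ η(‖x‖), where η(r) = (γ₀/ℓ(r) + σ_β + ρ_β r + ν_β r²)^{−1}. -/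
open MeasureTheory Set
open scoped ENNReal NNReal

noncomputable section

/-- The signal-to-residual-interference-plus-noise ratio of the transmitter at `x`
with respect to the receiver at the origin, under successive interference cancellation. -/
def SrINR (ℓ : ℝ → ℝ) (γ₀ : ℝ) (Φ : Set Plane) (x : Plane) : ℝ :=
  ℓ ‖x‖ / (tailInterference ℓ Φ ‖x‖ + γ₀)

/-- The deterministic lower bound `η(r)` on the SrINR at distance `r`. -/
def eta (ℓ : ℝ → ℝ) (γ₀ σβ ρβ νβ : ℝ) (r : ℝ) : ℝ :=
  (γ₀ / ℓ r + σβ + ρβ * r + νβ * r ^ 2)⁻¹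


lemma bern {q p : ℝ} (hq : 1 ≤ q) (hp : 1 ≤ p) : p * q ^ p⁻¹ ≤ q + (p - 1) := by
  have hq0 : (0:ℝ) ≤ q := by linarith
  have hp0 : p ≠ 0 := by positivity
  have h1 : (1:ℝ) ≤ q ^ p⁻¹ := Real.one_le_rpow hq (by positivity)
  have h := one_add_mul_self_le_rpow_one_add (s := q ^ p⁻¹ - 1) (by linarith) hp
  have h2 : (1 + (q ^ p⁻¹ - 1)) ^ p = q := by
    rw [add_sub_cancel, ← Real.rpow_mul hq0, inv_mul_cancel₀ hp0, Real.rpow_one]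
  rw [h2] at h; linarith

lemma aux_lt {C β t u : ℝ} (hC : 0 < C) (hβ : 0 < β) (ht : 0 < t) (hu : 0 < u)
    (h : u < C * t ^ (-β)) : t < C ^ β⁻¹ * u ^ (-β⁻¹) := by
  have htb : (0:ℝ) < t ^ β := Real.rpow_pos_of_pos ht β
  have h1 : u * t ^ β < C := by
    rw [Real.rpow_neg ht.le] at h
    calc u * t ^ β < C * (t ^ β)⁻¹ * t ^ β := by exact mul_lt_mul_of_pos_right h htb
      _ = C := by field_simp
  have h2 : (u * t ^ β) ^ β⁻¹ < C ^ β⁻¹ :=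
    Real.rpow_lt_rpow (by positivity) h1 (by positivity)
  rw [Real.mul_rpow hu.le htb.le, ← Real.rpow_mul ht.le, mul_inv_cancel₀ hβ.ne',
    Real.rpow_one] at h2
  have hup : (0:ℝ) < u ^ β⁻¹ := Real.rpow_pos_of_pos hu _
  rw [Real.rpow_neg hu.le, ← div_eq_mul_inv, lt_div_iff₀ hup, mul_comm]
  exact h2

lemma Lpow_le {C' β r L : ℝ} (e : ℝ) (he : 0 < e) (hC' : 0 < C') (hβ : 0 < β) (hr : 0 < r)
    (hL : 0 < L) (hLlb : C' * r ^ (-β) ≤ L) :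
    L ^ (1 - e * β⁻¹) ≤ L * (C' ^ (e * β⁻¹))⁻¹ * r ^ e := by
  have h2 : L ^ (-(e * β⁻¹)) ≤ (C' * r ^ (-β)) ^ (-(e * β⁻¹)) :=
    Real.rpow_le_rpow_of_nonpos (by positivity) hLlb (neg_nonpos.2 (by positivity))
  have h3 : (C' * r ^ (-β)) ^ (-(e * β⁻¹)) = (C' ^ (e * β⁻¹))⁻¹ * r ^ e := by
    rw [Real.mul_rpow hC'.le (by positivity), ← Real.rpow_mul hr.le, ← Real.rpow_neg hC'.le]
    have hex : -β * -(e * β⁻¹) = e := by field_simp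
    rw [hex]
  have h4 : L ^ (1 - e * β⁻¹) = L * L ^ (-(e * β⁻¹)) := by
    rw [sub_eq_add_neg, Real.rpow_add hL, Real.rpow_one]
  rw [h3] at h2
  rw [h4]
  calc L * L ^ (-(e * β⁻¹)) ≤ L * ((C' ^ (e * β⁻¹))⁻¹ * r ^ e) :=
        mul_le_mul_of_nonneg_left h2 hL.le
    _ = L * (C' ^ (e * β⁻¹))⁻¹ * r ^ e := by ring

lemma piece {C C' β r L e : ℝ} (hC' : 0 < C') (hCC' : C' ≤ C) (he : 0 < e) (heβ : e < β)
    (hr : 0 < r) (hL : 0 < L) (hLlb : C' * r ^ (-β) ≤ L) :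
    C ^ (e * β⁻¹) * (L ^ (1 - e * β⁻¹) / (1 - e * β⁻¹)) - r ^ e * L
      ≤ (C / C') * (e / (β - e)) * (r ^ e * L) := by
  have hβ : 0 < β := he.trans heβ
  have hC : 0 < C := hC'.trans_le hCC'
  have hq : 1 ≤ C / C' := (one_le_div hC').2 hCC'
  have hp : 1 ≤ β / e := (one_le_div he).2 heβ.le
  have hexp : (β / e)⁻¹ = e * β⁻¹ := by field_simp
  have h1e : 0 < 1 - e * β⁻¹ := by
    have : e * β⁻¹ < 1 := by rw [← div_eq_mul_inv, div_lt_one hβ]; exact heβ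
    linarith
  have hbe : β - e > 0 := by linarith
  have hre : (0:ℝ) < r ^ e := Real.rpow_pos_of_pos hr e
  have hb2 : β * ((C / C') ^ (e * β⁻¹)) ≤ e * (C / C') + (β - e) := by
    have hb := bern hq hp
    rw [hexp] at hb
    have := mul_le_mul_of_nonneg_left hb he.le
    have hee : e * (C / C' + (β / e - 1)) = e * (C / C') + (β - e) := by
      field_simp
    have hee2 : e * (β / e * (C / C') ^ (e * β⁻¹)) = β * ((C / C') ^ (e * β⁻¹)) := by
      field_simp
    rw [hee2, hee] at this; linarith
  have hq2 : C ^ (e * β⁻¹) * (C' ^ (e * β⁻¹))⁻¹ = (C / C') ^ (e * β⁻¹) := by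
    rw [Real.div_rpow hC.le hC'.le, div_eq_mul_inv]
  have hLp := Lpow_le (C' := C') (β := β) (r := r) (L := L) e he hC' hβ hr hL hLlb
  have hCe : (0:ℝ) < C ^ (e * β⁻¹) := Real.rpow_pos_of_pos hC _
  have step1 : C ^ (e * β⁻¹) * (L ^ (1 - e * β⁻¹) / (1 - e * β⁻¹))
      ≤ (C / C') ^ (e * β⁻¹) * (β / (β - e)) * (r ^ e * L) := by
    calc C ^ (e * β⁻¹) * (L ^ (1 - e * β⁻¹) / (1 - e * β⁻¹))
        ≤ C ^ (e * β⁻¹) * ((L * (C' ^ (e * β⁻¹))⁻¹ * r ^ e) / (1 - e * β⁻¹)) := by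
          gcongr
      _ = (C ^ (e * β⁻¹) * (C' ^ (e * β⁻¹))⁻¹) * (r ^ e * L) / (1 - e * β⁻¹) := by ring
      _ = (C / C') ^ (e * β⁻¹) * (β / (β - e)) * (r ^ e * L) := by
          rw [hq2]
          have h1e' : 1 - e * β⁻¹ = (β - e) / β := by field_simp
          rw [h1e']
          field_simp
  have step2 : (C / C') ^ (e * β⁻¹) * (β / (β - e)) * (r ^ e * L)
      ≤ ((e * (C / C') + (β - e)) / (β - e)) * (r ^ e * L) := by
    have : (C / C') ^ (e * β⁻¹) * (β / (β - e)) = (β * (C / C') ^ (e * β⁻¹)) / (β - e) := by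
      ring
    rw [this]
    gcongr
  have step3 : ((e * (C / C') + (β - e)) / (β - e)) * (r ^ e * L)
      = (C / C') * (e / (β - e)) * (r ^ e * L) + r ^ e * L := by
    field_simp
  linarith

def gfun (σ ρ ν C β r u : ℝ) : ℝ :=
  (σ - ρ * r - ν * r ^ 2) + ρ * C ^ β⁻¹ * u ^ (-β⁻¹) + ν * C ^ (2 * β⁻¹) * u ^ (-(2 * β⁻¹))

lemma tail_bound (Φ : Set Plane) (σ ρ ν : ℝ)
    (hσ : 0 ≤ σ) (hρ : 0 ≤ ρ) (hν : 0 ≤ ν)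
    (hloc : ∀ R : ℝ, (Φ ∩ Metric.closedBall 0 R).Finite)
    (hreg : RingRegulated Φ σ ρ ν)
    (ℓ : ℝ → ℝ) (hℓ0 : ∀ r, 0 ≤ ℓ r)
    (hℓanti : AntitoneOn ℓ (Set.Ici 0))
    (C C' r₀ β : ℝ) (hC' : 0 < C') (hCC' : C' ≤ C) (hr₀ : 0 < r₀) (hβ : 2 < β)
    (hℓlb : ∀ r, r₀ < r → C' * r ^ (-β) ≤ ℓ r)
    (hℓub : ∀ r, r₀ < r → ℓ r ≤ C * r ^ (-β))
    (r : ℝ) (hr : r₀ < r) :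
    tailInterference ℓ Φ r ≤ ℓ r * (σ + (C / C') * (ρ / (β - 1)) * r
      + (C / C') * (2 * ν / (β - 2)) * r ^ 2) := by
  have hr0 : 0 < r := hr₀.trans hr
  have hC : 0 < C := hC'.trans_le hCC'
  have hβ0 : 0 < β := by linarith
  set L := ℓ r with hLdef
  have hLlb : C' * r ^ (-β) ≤ L := hℓlb r hr
  have hL : 0 < L := lt_of_lt_of_le (by positivity) hLlb
  have hLub : L ≤ C * r ^ (-β) := hℓub r hr
  -- countability
  have hΦc : Φ.Countable := by
    have hsub : Φ ⊆ ⋃ n : ℕ, (Φ ∩ Metric.closedBall 0 n) := by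
      intro z hz
      obtain ⟨n, hn⟩ := exists_nat_ge (dist z 0)
      exact mem_iUnion.2 ⟨n, hz, Metric.mem_closedBall.2 hn⟩
    exact Set.Countable.mono hsub (Set.countable_iUnion (fun n : ℕ => (hloc (n : ℝ)).countable))
  haveI hcnt : Countable {w : Plane // w ∈ Φ ∧ r < ‖w‖} :=
    (hΦc.mono (fun z (hz : z ∈ Φ ∧ r < ‖z‖) => hz.1)).to_subtype
  -- key geometric fact
  have hgeo : ∀ u : ℝ, 0 < u → u < L →
      r < C ^ β⁻¹ * u ^ (-β⁻¹) := by
    intro u hu huL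
    exact aux_lt hC hβ0 hr0 hu (huL.trans_le hLub)
  have hgeq : ∀ u : ℝ, 0 < u →
      σ + ρ * (C ^ β⁻¹ * u ^ (-β⁻¹) - r) + ν * ((C ^ β⁻¹ * u ^ (-β⁻¹)) ^ 2 - r ^ 2)
        = gfun σ ρ ν C β r u := by
    intro u hu
    have hspow : (C ^ β⁻¹ * u ^ (-β⁻¹)) ^ 2 = C ^ (2 * β⁻¹) * u ^ (-(2 * β⁻¹)) := by
      rw [mul_pow, ← Real.rpow_natCast (C ^ β⁻¹) 2, ← Real.rpow_natCast (u ^ (-β⁻¹)) 2,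
        ← Real.rpow_mul hC.le, ← Real.rpow_mul hu.le]
      norm_num
      ring_nf
    rw [hspow, gfun]; ring
  -- Step A: express tail as toReal of an ENNReal tsum
  have hA : (∑' w : {w : Plane // w ∈ Φ ∧ r < ‖w‖},
      ENNReal.ofReal (ℓ ‖(w : Plane)‖)).toReal = tailInterference ℓ Φ r := by
    rw [ENNReal.tsum_toReal_eq (fun _ => ENNReal.ofReal_ne_top)]
    exact tsum_congr fun w => ENNReal.toReal_ofReal (hℓ0 _)
  -- per-point representation as an integral
  have hstep1 : ∀ w : {w : Plane // w ∈ Φ ∧ r < ‖w‖},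
      ENNReal.ofReal (ℓ ‖(w : Plane)‖)
        = ∫⁻ u in Ioo (0:ℝ) L, (Iio (ℓ ‖(w : Plane)‖)).indicator 1 u := by
    intro w
    have hwr : r ≤ ‖(w : Plane)‖ := w.2.2.le
    have hcL : ℓ ‖(w : Plane)‖ ≤ L :=
      hℓanti (mem_Ici.2 hr0.le) (mem_Ici.2 (hr0.le.trans hwr)) hwr
    rw [lintegral_indicator_one measurableSet_Iio, Measure.restrict_apply measurableSet_Iio]
    have hset : Iio (ℓ ‖(w : Plane)‖) ∩ Ioo 0 L = Ioo 0 (ℓ ‖(w : Plane)‖) := by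
      ext u
      constructor
      · rintro ⟨h1, h2, h3⟩; exact ⟨h2, h1⟩
      · rintro ⟨h1, h2⟩; exact ⟨h2, h1, h2.trans_le hcL⟩
    rw [hset, Real.volume_Ioo, sub_zero]
  -- swap sum and integral
  have hswap : ∑' w : {w : Plane // w ∈ Φ ∧ r < ‖w‖},
      ∫⁻ u in Ioo (0:ℝ) L, (Iio (ℓ ‖(w : Plane)‖)).indicator 1 u
      = ∫⁻ u in Ioo (0:ℝ) L, ∑' w : {w : Plane // w ∈ Φ ∧ r < ‖w‖},
          (Iio (ℓ ‖(w : Plane)‖)).indicator 1 u :=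
    (lintegral_tsum fun _ => (measurable_one.indicator measurableSet_Iio).aemeasurable).symm
  -- pointwise counting bound
  have hstep3 : ∀ u ∈ Ioo (0:ℝ) L,
      ∑' w : {w : Plane // w ∈ Φ ∧ r < ‖w‖}, (Iio (ℓ ‖(w : Plane)‖)).indicator 1 u
        ≤ ENNReal.ofReal (gfun σ ρ ν C β r u) := by
    intro u hu
    set s : ℝ := C ^ β⁻¹ * u ^ (-β⁻¹) with hs
    have hus : r < s := hgeo u hu.1 hu.2
    set B : Set Plane := Φ ∩ {z | r < ‖z‖ ∧ ‖z‖ < s} with hB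
    have hBfin : B.Finite := by
      refine (hloc s).subset ?_
      rintro z ⟨hz1, hz2, hz3⟩
      exact ⟨hz1, Metric.mem_closedBall.2 (by rw [dist_zero_right]; exact hz3.le)⟩
    have hmem : ∀ w : {w : Plane // w ∈ Φ ∧ r < ‖w‖},
        u < ℓ ‖(w : Plane)‖ → (w : Plane) ∈ B := by
      intro w hw
      refine ⟨w.2.1, w.2.2, ?_⟩
      have h2 : u < C * ‖(w : Plane)‖ ^ (-β) := hw.trans_le (hℓub _ (hr.trans w.2.2))
      exact aux_lt hC hβ0 (hr0.trans w.2.2) hu.1 h2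
    set S : Set {w : Plane // w ∈ Φ ∧ r < ‖w‖} := {w | (w : Plane) ∈ B} with hS
    have h1 : (∑' w : {w : Plane // w ∈ Φ ∧ r < ‖w‖},
        (Iio (ℓ ‖(w : Plane)‖)).indicator (1 : ℝ → ℝ≥0∞) u)
        ≤ ∑' w : {w : Plane // w ∈ Φ ∧ r < ‖w‖},
            S.indicator (1 : {w : Plane // w ∈ Φ ∧ r < ‖w‖} → ℝ≥0∞) w := by
      apply ENNReal.tsum_le_tsum
      intro w
      by_cases h : u ∈ Iio (ℓ ‖(w : Plane)‖)
      · rw [indicator_of_mem h, indicator_of_mem (show w ∈ S from hmem w h), Pi.one_apply, Pi.one_apply]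
      · rw [indicator_of_notMem h]; exact zero_le
    have h2 : ∑' w : {w : Plane // w ∈ Φ ∧ r < ‖w‖}, S.indicator (1 : {w : Plane // w ∈ Φ ∧ r < ‖w‖} → ℝ≥0∞) w
        = (S.encard : ℝ≥0∞) := by
      rw [← tsum_subtype S (1 : {w : Plane // w ∈ Φ ∧ r < ‖w‖} → ℝ≥0∞)]
      exact ENNReal.tsum_set_one S
    have h3 : S.encard ≤ B.encard := by
      calc S.encard = ((Subtype.val '' S : Set Plane)).encard :=
            (Set.InjOn.encard_image (Subtype.val_injective.injOn)).symm
        _ ≤ B.encard := Set.encard_le_encard (by rintro _ ⟨w, hw, rfl⟩; exact hw)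
    have h4 : (B.encard : ℝ≥0∞) ≤ ENNReal.ofReal (gfun σ ρ ν C β r u) := by
      have hBn : B.encard = (B.ncard : ℕ∞) := by
        rw [hBfin.encard_eq_coe_toFinset_card, Set.ncard_eq_toFinset_card _ hBfin]
      rw [hBn, ENat.toENNReal_coe, ← ENNReal.ofReal_natCast]
      apply ENNReal.ofReal_le_ofReal
      have hcount : (B.ncard : ℝ) ≤ σ + ρ * (s - r) + ν * (s ^ 2 - r ^ 2) :=
        hreg r s hr0.le hus
      calc (B.ncard : ℝ) ≤ σ + ρ * (s - r) + ν * (s ^ 2 - r ^ 2) := hcount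
        _ = gfun σ ρ ν C β r u := hgeq u hu.1
    calc (∑' w : {w : Plane // w ∈ Φ ∧ r < ‖w‖},
          (Iio (ℓ ‖(w : Plane)‖)).indicator (1 : ℝ → ℝ≥0∞) u)
        ≤ ∑' w : {w : Plane // w ∈ Φ ∧ r < ‖w‖}, S.indicator (1 : {w : Plane // w ∈ Φ ∧ r < ‖w‖} → ℝ≥0∞) w := h1
      _ = (S.encard : ℝ≥0∞) := h2
      _ ≤ (B.encard : ℝ≥0∞) := ENat.toENNReal_le.2 h3
      _ ≤ ENNReal.ofReal (gfun σ ρ ν C β r u) := h4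
    -- integrability and exponent facts
  have hm1 : (-1:ℝ) < -β⁻¹ := by
    have h1 : β⁻¹ < 1 := by
      rw [inv_lt_one_iff₀]; right; linarith
    linarith
  have hm2 : (-1:ℝ) < -(2*β⁻¹) := by
    have h2 : 2*β⁻¹ < 1 := by rw [← div_eq_mul_inv, div_lt_one hβ0]; linarith
    linarith
  have hint1 : IntervalIntegrable (fun u : ℝ => u ^ (-β⁻¹)) volume 0 L :=
    intervalIntegral.intervalIntegrable_rpow' hm1
  have hint2 : IntervalIntegrable (fun u : ℝ => u ^ (-(2*β⁻¹))) volume 0 L :=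
    intervalIntegral.intervalIntegrable_rpow' hm2
  have hIg : IntervalIntegrable (fun u => gfun σ ρ ν C β r u) volume 0 L := by
    simp only [gfun]
    exact (intervalIntegrable_const.add ((hint1.const_mul _))).add (hint2.const_mul _)
  have hgnn : ∀ u ∈ Ioo (0:ℝ) L, 0 ≤ gfun σ ρ ν C β r u := by
    intro u hu
    rw [← hgeq u hu.1]
    have h1 : r < C ^ β⁻¹ * u ^ (-β⁻¹) := hgeo u hu.1 hu.2
    have h2 : r^2 ≤ (C ^ β⁻¹ * u ^ (-β⁻¹))^2 := by nlinarith
    nlinarith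
  have hgm : Measurable fun u : ℝ => ENNReal.ofReal (gfun σ ρ ν C β r u) := by
    simp only [gfun]
    fun_prop
  have hIoo : ∫⁻ u in Ioo (0:ℝ) L, ENNReal.ofReal (gfun σ ρ ν C β r u)
      = ENNReal.ofReal (∫ u in (0:ℝ)..L, gfun σ ρ ν C β r u) := by
    have hInt : IntegrableOn (fun u => gfun σ ρ ν C β r u) (Ioo 0 L) volume :=
      ((intervalIntegrable_iff_integrableOn_Ioc_of_le hL.le).1 hIg).mono_set Ioo_subset_Ioc_self
    have hnn : 0 ≤ᵐ[volume.restrict (Ioo 0 L)] fun u => gfun σ ρ ν C β r u := by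
      filter_upwards [ae_restrict_mem measurableSet_Ioo] with u hu
      exact hgnn u hu
    rw [← ofReal_integral_eq_lintegral_ofReal hInt hnn]
    congr 1
    rw [intervalIntegral.integral_of_le hL.le, integral_Ioc_eq_integral_Ioo]
  have hval : ∫ u in (0:ℝ)..L, gfun σ ρ ν C β r u
      = (σ - ρ*r - ν*r^2) * L + (ρ * C ^ β⁻¹) * (L ^ (1-β⁻¹) / (1-β⁻¹))
        + (ν * C ^ (2*β⁻¹)) * (L ^ (1-(2*β⁻¹)) / (1-(2*β⁻¹))) := by
    have he1 : -β⁻¹ + 1 = 1 - β⁻¹ := by ring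
    have he2 : -(2*β⁻¹) + 1 = 1 - 2*β⁻¹ := by ring
    simp only [gfun]
    rw [intervalIntegral.integral_add (intervalIntegrable_const.add (hint1.const_mul _))
          (hint2.const_mul _),
        intervalIntegral.integral_add intervalIntegrable_const (hint1.const_mul _),
        intervalIntegral.integral_const_mul, intervalIntegral.integral_const_mul,
        intervalIntegral.integral_const,
        integral_rpow (Or.inl hm1), integral_rpow (Or.inl hm2)]
    rw [Real.zero_rpow (by linarith : -β⁻¹ + 1 ≠ 0),
        Real.zero_rpow (by linarith : -(2*β⁻¹) + 1 ≠ 0)]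
    rw [he1, he2]
    simp only [smul_eq_mul, sub_zero]
    ring
  have hfinal : (σ - ρ*r - ν*r^2) * L + (ρ * C ^ β⁻¹) * (L ^ (1-β⁻¹) / (1-β⁻¹))
        + (ν * C ^ (2*β⁻¹)) * (L ^ (1-(2*β⁻¹)) / (1-(2*β⁻¹)))
      ≤ L * (σ + (C / C') * (ρ / (β - 1)) * r + (C / C') * (2 * ν / (β - 2)) * r ^ 2) := by
    have p1 := piece (C:=C) (C':=C') (β:=β) (r:=r) (L:=L) (e:=1) hC' hCC' one_pos
      (by linarith) hr0 hL hLlb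
    have p2 := piece (C:=C) (C':=C') (β:=β) (r:=r) (L:=L) (e:=2) hC' hCC' two_pos hβ hr0 hL hLlb
    rw [one_mul, Real.rpow_one] at p1
    rw [Real.rpow_two] at p2
    have q1 := mul_le_mul_of_nonneg_left p1 hρ
    have q2 := mul_le_mul_of_nonneg_left p2 hν
    ring_nf at q1 q2 ⊢
    linarith [q1, q2]
  rw [← hA]
  have hEnn : 0 ≤ L * (σ + (C / C') * (ρ / (β - 1)) * r
      + (C / C') * (2 * ν / (β - 2)) * r ^ 2) := by
    have hβ1 : (0:ℝ) < β - 1 := by linarith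
    have hβ2 : (0:ℝ) < β - 2 := by linarith
    apply mul_nonneg hL.le
    have hC : 0 < C := hC'.trans_le hCC'
    have t1 : 0 ≤ (C / C') * (ρ / (β - 1)) * r :=
      mul_nonneg (mul_nonneg (div_nonneg hC.le hC'.le) (div_nonneg hρ hβ1.le)) hr0.le
    have t2 : 0 ≤ (C / C') * (2 * ν / (β - 2)) * r ^ 2 :=
      mul_nonneg (mul_nonneg (div_nonneg hC.le hC'.le)
        (div_nonneg (by linarith) hβ2.le)) (sq_nonneg r)
    linarith
  have hle : (∑' w : {w : Plane // w ∈ Φ ∧ r < ‖w‖}, ENNReal.ofReal (ℓ ‖(w : Plane)‖))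
      ≤ ENNReal.ofReal (L * (σ + (C / C') * (ρ / (β - 1)) * r
          + (C / C') * (2 * ν / (β - 2)) * r ^ 2)) := by
    calc (∑' w : {w : Plane // w ∈ Φ ∧ r < ‖w‖}, ENNReal.ofReal (ℓ ‖(w : Plane)‖))
        = ∑' w : {w : Plane // w ∈ Φ ∧ r < ‖w‖},
            ∫⁻ u in Ioo (0:ℝ) L, (Iio (ℓ ‖(w : Plane)‖)).indicator 1 u := tsum_congr hstep1
      _ = ∫⁻ u in Ioo (0:ℝ) L, ∑' w : {w : Plane // w ∈ Φ ∧ r < ‖w‖},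
            (Iio (ℓ ‖(w : Plane)‖)).indicator 1 u := hswap
      _ ≤ ∫⁻ u in Ioo (0:ℝ) L, ENNReal.ofReal (gfun σ ρ ν C β r u) :=
            setLIntegral_mono hgm hstep3
      _ = ENNReal.ofReal (∫ u in (0:ℝ)..L, gfun σ ρ ν C β r u) := hIoo
      _ ≤ ENNReal.ofReal (L * (σ + (C / C') * (ρ / (β - 1)) * r
          + (C / C') * (2 * ν / (β - 2)) * r ^ 2)) :=
            ENNReal.ofReal_le_ofReal (by rw [hval]; exact hfinal)
  calc (∑' w : {w : Plane // w ∈ Φ ∧ r < ‖w‖}, ENNReal.ofReal (ℓ ‖(w : Plane)‖)).toReal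
      ≤ (ENNReal.ofReal (L * (σ + (C / C') * (ρ / (β - 1)) * r
          + (C / C') * (2 * ν / (β - 2)) * r ^ 2))).toReal :=
        ENNReal.toReal_mono ENNReal.ofReal_ne_top hle
    _ = L * (σ + (C / C') * (ρ / (β - 1)) * r + (C / C') * (2 * ν / (β - 2)) * r ^ 2) :=
        ENNReal.toReal_ofReal hEnn

theorem stmt2 (Φ : Set Plane) (σ ρ ν : ℝ)
    (hσ : 0 ≤ σ) (hρ : 0 ≤ ρ) (hν : 0 ≤ ν)
    (hloc : ∀ R : ℝ, (Φ ∩ Metric.closedBall 0 R).Finite)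
    (hreg : RingRegulated Φ σ ρ ν)
    (ℓ : ℝ → ℝ) (hℓ0 : ∀ r, 0 ≤ ℓ r)
    (hℓanti : AntitoneOn ℓ (Set.Ici 0))
    (hℓbdd : BddAbove (ℓ '' Set.Ici 0))
    (C C' r₀ β : ℝ) (hC' : 0 < C') (hCC' : C' ≤ C) (hr₀ : 0 < r₀) (hβ : 2 < β)
    (hℓlb : ∀ r, r₀ < r → C' * r ^ (-β) ≤ ℓ r)
    (hℓub : ∀ r, r₀ < r → ℓ r ≤ C * r ^ (-β))
    (γ₀ : ℝ) (hγ₀ : 0 < γ₀) :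
    ∀ x : Plane, r₀ < ‖x‖ →
      eta ℓ γ₀ σ ((C / C') * (ρ / (β - 1))) ((C / C') * (2 * ν / (β - 2))) ‖x‖
        ≤ SrINR ℓ γ₀ Φ x := by
  intro x hx
  set r := ‖x‖ with hrdef
  have hr0 : 0 < r := hr₀.trans hx
  have hβ0 : 0 < β := by linarith
  have hL : 0 < ℓ r := lt_of_lt_of_le (by positivity) (hℓlb r hx)
  have hI := tail_bound Φ σ ρ ν hσ hρ hν hloc hreg ℓ hℓ0 hℓanti C C' r₀ β hC' hCC' hr₀ hβ
    hℓlb hℓub r hx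
  have hInn : 0 ≤ tailInterference ℓ Φ r := tsum_nonneg fun w => hℓ0 _
  have hβ1 : (0:ℝ) < β - 1 := by linarith
  have hβ2 : (0:ℝ) < β - 2 := by linarith
  have hEnn : 0 ≤ σ + (C / C') * (ρ / (β - 1)) * r + (C / C') * (2 * ν / (β - 2)) * r ^ 2 := by
    have hC : 0 < C := hC'.trans_le hCC'
    have t1 : 0 ≤ (C / C') * (ρ / (β - 1)) * r :=
      mul_nonneg (mul_nonneg (div_nonneg hC.le hC'.le) (div_nonneg hρ hβ1.le)) hr0.le
    have t2 : 0 ≤ (C / C') * (2 * ν / (β - 2)) * r ^ 2 :=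
      mul_nonneg (mul_nonneg (div_nonneg hC.le hC'.le)
        (div_nonneg (by linarith) hβ2.le)) (sq_nonneg r)
    linarith
  simp only [eta, SrINR]
  have hD : 0 < tailInterference ℓ Φ r + γ₀ := by linarith
  have hd : 0 < γ₀ / ℓ r + σ + (C / C') * (ρ / (β - 1)) * r
      + (C / C') * (2 * ν / (β - 2)) * r ^ 2 := by
    have : 0 < γ₀ / ℓ r := by positivity
    linarith
  rw [inv_eq_one_div, div_le_div_iff₀ hd hD, one_mul]
  have hexp : ℓ r * (γ₀ / ℓ r + σ + (C / C') * (ρ / (β - 1)) * r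
      + (C / C') * (2 * ν / (β - 2)) * r ^ 2)
      = γ₀ + ℓ r * (σ + (C / C') * (ρ / (β - 1)) * r
          + (C / C') * (2 * ν / (β - 2)) * r ^ 2) := by
    field_simp
    ring
  rw [hexp]
  linarith
end
end

section
/- Let R be a nonnegative random variable on a probability space, let m > 0, let T be a positive integer, and let θ > 0 and ζ > 0 be such that 𝔼[exp(−t θ R)] ≤ exp(−t ζ) for every integer t with 1 ≤ t ≤ T. Then the probability that the virtual decoding delay exceeds T satisfies P(T · R < m) ≤ exp(m θ − T ζ) / (1 − exp(−ζ)). -/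
open MeasureTheory

noncomputable section

theorem stmt8 {Ω : Type*} [MeasurableSpace Ω] (P : Measure Ω) [IsProbabilityMeasure P]
    (R : Ω → ℝ) (hRmeas : Measurable R) (hR0 : ∀ ω, 0 ≤ R ω)
    (m : ℝ) (hm : 0 < m) (T : ℕ) (hT : 0 < T)
    (θ ζ : ℝ) (hθ : 0 < θ) (hζ : 0 < ζ)
    (hmgf : ∀ t : ℕ, 1 ≤ t → t ≤ T →
      ∫ ω, Real.exp (-(t : ℝ) * θ * R ω) ∂P ≤ Real.exp (-(t : ℝ) * ζ)) :
    (P {ω | (T : ℝ) * R ω < m}).toReal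
      ≤ Real.exp (m * θ - (T : ℝ) * ζ) / (1 - Real.exp (-ζ)) := by
  set f : Ω → ℝ := fun ω => Real.exp (-(T : ℝ) * θ * R ω) with hf
  have hTpos : (0 : ℝ) < T := by exact_mod_cast hT
  have hfmeas : Measurable f := (Real.measurable_exp.comp (measurable_const.mul hRmeas))
  have hfbd : ∀ ω, ‖f ω‖ ≤ 1 := by
    intro ω
    rw [Real.norm_eq_abs, abs_of_pos (Real.exp_pos _)]
    rw [← Real.exp_zero]
    apply Real.exp_le_exp.mpr
    have : 0 ≤ (T : ℝ) * θ * R ω := mul_nonneg (mul_nonneg hTpos.le hθ.le) (hR0 ω)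
    linarith
  have hfint : Integrable f P :=
    (integrable_const (1 : ℝ)).mono' hfmeas.aestronglyMeasurable
      (Filter.Eventually.of_forall hfbd)
  have hfnn : 0 ≤ᵐ[P] f := Filter.Eventually.of_forall fun ω => (Real.exp_pos _).le
  have hmarkov := mul_meas_ge_le_integral_of_nonneg hfnn hfint (Real.exp (-(θ * m)))
  have hsub : {ω | (T : ℝ) * R ω < m} ⊆ {ω | Real.exp (-(θ * m)) ≤ f ω} := by
    intro ω hω
    simp only [Set.mem_setOf_eq] at hω ⊢
    apply Real.exp_le_exp.mpr
    nlinarith [hR0 ω]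
  have hmono : P {ω | (T : ℝ) * R ω < m} ≤ P {ω | Real.exp (-(θ * m)) ≤ f ω} := measure_mono hsub
  have hfin : P {ω | Real.exp (-(θ * m)) ≤ f ω} ≠ ⊤ := measure_ne_top _ _
  have hmono' : (P {ω | (T : ℝ) * R ω < m}).toReal
      ≤ (P {ω | Real.exp (-(θ * m)) ≤ f ω}).toReal :=
    ENNReal.toReal_mono hfin hmono
  have hint : ∫ ω, f ω ∂P ≤ Real.exp (-(T : ℝ) * ζ) := hmgf T hT le_rfl
  have key : (P {ω | (T : ℝ) * R ω < m}).toReal ≤ Real.exp (m * θ - (T : ℝ) * ζ) := by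
    have h1 : Real.exp (-(θ * m)) * (P {ω | (T : ℝ) * R ω < m}).toReal
        ≤ Real.exp (-(T : ℝ) * ζ) := by
      calc Real.exp (-(θ * m)) * (P {ω | (T : ℝ) * R ω < m}).toReal
          ≤ Real.exp (-(θ * m)) * (P {ω | Real.exp (-(θ * m)) ≤ f ω}).toReal := by
            exact mul_le_mul_of_nonneg_left hmono' (Real.exp_pos _).le
        _ ≤ ∫ ω, f ω ∂P := hmarkov
        _ ≤ Real.exp (-(T : ℝ) * ζ) := hint
    have h2 : (P {ω | (T : ℝ) * R ω < m}).toReal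
        ≤ Real.exp (-(T : ℝ) * ζ) / Real.exp (-(θ * m)) := by
      rw [le_div_iff₀ (Real.exp_pos _)]
      linarith [mul_comm (Real.exp (-(θ * m))) ((P {ω | (T : ℝ) * R ω < m}).toReal)]
    calc (P {ω | (T : ℝ) * R ω < m}).toReal
        ≤ Real.exp (-(T : ℝ) * ζ) / Real.exp (-(θ * m)) := h2
      _ = Real.exp (m * θ - (T : ℝ) * ζ) := by
          rw [← Real.exp_sub]; ring_nf
  have hden : 0 < 1 - Real.exp (-ζ) := by
    have : Real.exp (-ζ) < 1 := Real.exp_lt_one_iff.mpr (by linarith)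
    linarith
  calc (P {ω | (T : ℝ) * R ω < m}).toReal
      ≤ Real.exp (m * θ - (T : ℝ) * ζ) := key
    _ ≤ Real.exp (m * θ - (T : ℝ) * ζ) / (1 - Real.exp (-ζ)) := by
        rw [le_div_iff₀ hden]
        nlinarith [Real.exp_pos (m * θ - (T : ℝ) * ζ), Real.exp_pos (-ζ)]
end
end
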